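/- Let n = r(t−1) + 2 with r ≥ 1 and t ≥ 3, and let G = K_1 ∇ L_{r,t−1} be the join of a single vertex with the graph consisting of r copies of K_t intersecting in exactly one common vertex. Then the signless Laplacian spectral radius satisfies q(G) < n + 2t − 3. -/

import Mathlib

open SimpleGraph Finset

attribute [local instance] Classical.propDecidable

noncomputable def signlessLaplacian {V : Type*} [Fintype V] [DecidableEq V] (G : SimpleGraph V) : Matrix V V ℝ :=
  Matrix.diagonal (fun v => (G.degree v : ℝ)) + G.adjMatrix ℝ

/-- The signless Laplacian spectral radius: the largest (real) eigenvalue of Q(G). -/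
noncomputable def qspec {V : Type*} [Fintype V] [DecidableEq V] (G : SimpleGraph V) : ℝ :=
  sSup {μ : ℝ | ∃ x : V → ℝ, x ≠ 0 ∧ (signlessLaplacian G).mulVec x = μ • x}

/-- `S_{n,t}`: the join of a clique on the first `t` vertices with an independent set. -/
def Snt (n t : ℕ) : SimpleGraph (Fin n) :=
  SimpleGraph.fromRel (fun i j => (i : ℕ) < t ∨ (j : ℕ) < t)

/-- `G` contains a copy of `H` as a subgraph. -/
def Contains {W V : Type*} (H : SimpleGraph W) (G : SimpleGraph V) : Prop :=
  ∃ f : H →g G, Function.Injective f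

/-- `G` contains vertex-disjoint paths on `2 * a i` vertices, for `i : Fin k`. -/
def ContainsDisjPaths {V : Type*} (G : SimpleGraph V) {k : ℕ} (a : Fin k → ℕ) : Prop :=
  ∃ f : ∀ i : Fin k, Fin (2 * a i) → V,
    (∀ i, Function.Injective (f i)) ∧
    (∀ i j, i ≠ j → ∀ x y, f i x ≠ f j y) ∧
    (∀ i x y, (SimpleGraph.pathGraph (2 * a i)).Adj x y → G.Adj (f i x) (f i y))

/-- The join `K₁ ∇ L_{r,s}`: an apex vertex `none`, the center `some none`, and
`r` cliques of size `s` (so each clique of `L_{r,s}` has `s + 1` vertices with the center). -/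
def K1joinL (r s : ℕ) : SimpleGraph (Option (Option (Fin r × Fin s))) where
  Adj x y := x ≠ y ∧ (x = none ∨ y = none ∨ x = some none ∨ y = some none ∨
    ∃ p q, x = some (some p) ∧ y = some (some q) ∧ p.1 = q.1)
  symm := ⟨by
    rintro x y ⟨hne, h⟩
    refine ⟨hne.symm, ?_⟩
    rcases h with h | h | h | h | ⟨p, q, hp, hq, h⟩
    · exact Or.inr (Or.inl h)
    · exact Or.inl h
    · exact Or.inr (Or.inr (Or.inr (Or.inl h)))
    · exact Or.inr (Or.inr (Or.inl h))
    · exact Or.inr (Or.inr (Or.inr (Or.inr ⟨q, p, hq, hp, h.symm⟩)))⟩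
  loopless := ⟨fun x h => h.1 rfl⟩

/-! ### Auxiliary lemmas -/

/-- Weighted Gershgorin bound: every eigenvalue of a nonnegative matrix is bounded in
absolute value by `c` whenever the weighted row sums satisfy `∑ u, M v u * w u ≤ c * w v`. -/
lemma abs_eig_le {V : Type*} [Fintype V] (M : Matrix V V ℝ) (hM : ∀ i j, 0 ≤ M i j)
    (w : V → ℝ) (hw : ∀ v, 0 < w v) (c : ℝ) (hrow : ∀ v, ∑ u, M v u * w u ≤ c * w v)
    (μ : ℝ) (x : V → ℝ) (hx : x ≠ 0) (heig : M.mulVec x = μ • x) : |μ| ≤ c := by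
  obtain ⟨u0, hu0⟩ := Function.ne_iff.mp hx
  have hne : (Finset.univ : Finset V).Nonempty := ⟨u0, Finset.mem_univ u0⟩
  obtain ⟨v, -, hv⟩ := Finset.exists_max_image Finset.univ (fun u => |x u| / w u) hne
  set m := |x v| / w v with hm
  have hmu : ∀ u, |x u| ≤ m * w u := by
    intro u
    have := hv u (Finset.mem_univ u)
    rwa [div_le_iff₀ (hw u)] at this
  have hm0 : 0 < m := by
    have h1 : |x u0| / w u0 ≤ m := hv u0 (Finset.mem_univ u0)
    have : 0 < |x u0| / w u0 := div_pos (abs_pos.mpr hu0) (hw u0)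
    linarith
  have hxv : |x v| = m * w v := (div_mul_cancel₀ _ (ne_of_gt (hw v))).symm
  have heq : μ * x v = ∑ u, M v u * x u := by
    have := congrFun heig v
    simp only [Matrix.mulVec, dotProduct, Pi.smul_apply, smul_eq_mul] at this
    linarith [this]
  have key : |μ| * (m * w v) ≤ c * (m * w v) := by
    calc |μ| * (m * w v) = |μ * x v| := by rw [abs_mul, hxv]
    _ = |∑ u, M v u * x u| := by rw [heq]
    _ ≤ ∑ u, |M v u * x u| := Finset.abs_sum_le_sum_abs _ _
    _ = ∑ u, M v u * |x u| := by
        refine Finset.sum_congr rfl fun u _ => ?_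
        rw [abs_mul, abs_of_nonneg (hM v u)]
    _ ≤ ∑ u, M v u * (m * w u) := by
        refine Finset.sum_le_sum fun u _ => mul_le_mul_of_nonneg_left (hmu u) (hM v u)
    _ = m * ∑ u, M v u * w u := by rw [Finset.mul_sum]; exact Finset.sum_congr rfl fun u _ => by ring
    _ ≤ m * (c * w v) := mul_le_mul_of_nonneg_left (hrow v) (le_of_lt hm0)
    _ = c * (m * w v) := by ring
  have hpos : 0 < m * w v := mul_pos hm0 (hw v)
  exact le_of_mul_le_mul_right key hpos

/-- If all weighted row sums of the signless Laplacian are strictly less than `B * w v`,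
then the signless Laplacian spectral radius is strictly less than `B`. -/
lemma qspec_lt {V : Type*} [Fintype V] [DecidableEq V] [Nonempty V] (G : SimpleGraph V)
    (w : V → ℝ) (hw : ∀ v, 0 < w v) (B : ℝ)
    (hrow : ∀ v, ∑ u, signlessLaplacian G v u * w u < B * w v) : qspec G < B := by
  set M := signlessLaplacian G with hMdef
  have hM : ∀ i j, 0 ≤ M i j := by
    intro i j
    simp only [hMdef, signlessLaplacian, Matrix.add_apply, Matrix.diagonal_apply,
      SimpleGraph.adjMatrix_apply]
    positivity
  have hneU : (Finset.univ : Finset V).Nonempty := Finset.univ_nonempty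
  set a := Finset.univ.sup' hneU (fun v => (∑ u, M v u * w u) / w v) with hadef
  have ha : ∀ v, ∑ u, M v u * w u ≤ a * w v := by
    intro v
    have := Finset.le_sup' (fun v => (∑ u, M v u * w u) / w v) (Finset.mem_univ v)
    rwa [div_le_iff₀ (hw v)] at this
  have ha0 : 0 ≤ a := by
    obtain ⟨v⟩ := ‹Nonempty V›
    have h1 : (0:ℝ) ≤ (∑ u, M v u * w u) / w v := by
      apply div_nonneg _ (le_of_lt (hw v))
      exact Finset.sum_nonneg fun u _ => mul_nonneg (hM v u) (le_of_lt (hw u))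
    exact h1.trans (Finset.le_sup' (fun v => (∑ u, M v u * w u) / w v) (Finset.mem_univ v))
  have haB : a < B := by
    rw [hadef, Finset.sup'_lt_iff]
    exact fun v _ => (div_lt_iff₀ (hw v)).mpr (hrow v)
  have hq : qspec G ≤ a := by
    apply Real.sSup_le _ ha0
    rintro μ ⟨x, hx, heig⟩
    exact le_trans (le_abs_self μ) (abs_eig_le M hM w hw a ha μ x hx heig)
  linarith

section K1joinLFacts

variable {r s : ℕ}

lemma adj_apex (y : Option (Option (Fin r × Fin s))) : (K1joinL r s).Adj none y ↔ y ≠ none := by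
  constructor
  · rintro ⟨hne, -⟩; exact fun h => hne h.symm
  · intro h; exact ⟨fun h' => h h'.symm, Or.inl rfl⟩

lemma adj_center (y : Option (Option (Fin r × Fin s))) :
    (K1joinL r s).Adj (some none) y ↔ y ≠ some none := by
  constructor
  · rintro ⟨hne, -⟩; exact fun h => hne h.symm
  · intro h; exact ⟨fun h' => h h'.symm, Or.inr (Or.inr (Or.inl rfl))⟩

lemma adj_block (p : Fin r × Fin s) (y : Option (Option (Fin r × Fin s))) :
    (K1joinL r s).Adj (some (some p)) y ↔
      (y = none ∨ y = some none ∨ ∃ q, y = some (some q) ∧ q.1 = p.1 ∧ q ≠ p) := by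
  constructor
  · rintro ⟨hne, h⟩
    rcases h with h | h | h | h | ⟨p', q', hp', hq', h⟩
    · exact absurd h (by simp)
    · exact Or.inl h
    · exact absurd h (by simp)
    · exact Or.inr (Or.inl h)
    · refine Or.inr (Or.inr ⟨q', hq', ?_, ?_⟩)
      · have : p' = p := by simpa using hp'.symm
        rw [← this]; exact h.symm
      · rintro rfl; exact hne (by rw [hq'])
  · rintro (rfl | rfl | ⟨q, rfl, h1, h2⟩)
    · exact ⟨by simp, Or.inr (Or.inl rfl)⟩
    · exact ⟨by simp, Or.inr (Or.inr (Or.inr (Or.inl rfl)))⟩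
    · exact ⟨by simpa using fun h => h2 h.symm, Or.inr (Or.inr (Or.inr (Or.inr ⟨p, q, rfl, rfl, h1.symm⟩)))⟩

lemma sumV (f : Option (Option (Fin r × Fin s)) → ℝ) :
    ∑ u, f u = f none + f (some none) + ∑ p : Fin r × Fin s, f (some (some p)) := by
  rw [Fintype.sum_option, Fintype.sum_option]; ring

lemma deg_apex : ((K1joinL r s).degree none : ℝ) = r * s + 1 := by
  have h : (K1joinL r s).degree none = ∑ u, if (K1joinL r s).Adj none u then 1 else 0 := by
    rw [degree, neighborFinset_eq_filter, Finset.card_filter]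
  rw [h]
  push_cast
  rw [sumV]
  simp [adj_apex]
  ring

lemma deg_center : ((K1joinL r s).degree (some none) : ℝ) = r * s + 1 := by
  have h : (K1joinL r s).degree (some none) = ∑ u, if (K1joinL r s).Adj (some none) u then 1 else 0 := by
    rw [degree, neighborFinset_eq_filter, Finset.card_filter]
  rw [h]
  push_cast
  rw [sumV]
  simp [adj_center]
  ring

lemma block_sum (p : Fin r × Fin s) (c : ℝ) :
    (∑ q : Fin r × Fin s, if (K1joinL r s).Adj (some (some p)) (some (some q)) then c else 0)
      = (s - 1) * c := by
  have hadj : ∀ q : Fin r × Fin s, (K1joinL r s).Adj (some (some p)) (some (some q)) ↔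
      (q.1 = p.1 ∧ q.2 ≠ p.2) := by
    intro q
    rw [adj_block]
    constructor
    · rintro (h | h | ⟨q', hq', h1, h2⟩)
      · simp at h
      · simp at h
      · have : q' = q := by simpa using hq'.symm
        subst this
        refine ⟨h1, fun hb => h2 ?_⟩
        exact Prod.ext h1 hb
    · rintro ⟨h1, h2⟩
      exact Or.inr (Or.inr ⟨q, rfl, h1, fun h => h2 (by rw [h])⟩)
  have : ∀ q : Fin r × Fin s,
      (if (K1joinL r s).Adj (some (some p)) (some (some q)) then c else 0)
        = (if q.1 = p.1 then 1 else 0) * (if q.2 ≠ p.2 then c else 0) := by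
    intro q
    rw [if_congr (hadj q) rfl rfl, ite_and]
    split_ifs <;> ring
  rw [Finset.sum_congr rfl (fun q _ => this q)]
  rw [Fintype.sum_prod_type]
  have hb : (∑ b : Fin s, if b ≠ p.2 then c else 0) = (s - 1) * c := by
    have : ∀ b : Fin s, (if b ≠ p.2 then c else 0) = c - (if b = p.2 then c else 0) := by
      intro b
      by_cases h : b = p.2 <;> simp [h]
    rw [Finset.sum_congr rfl (fun b _ => this b), Finset.sum_sub_distrib,
      Finset.sum_const, Finset.sum_ite_eq' Finset.univ p.2 (fun _ => c)]
    simp [Finset.card_univ]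
    ring
  have ha : ∀ a : Fin r, (∑ b : Fin s, (if a = p.1 then (1:ℝ) else 0) * (if b ≠ p.2 then c else 0))
      = (if a = p.1 then (1:ℝ) else 0) * ((s-1) * c) := by
    intro a
    rw [← Finset.mul_sum, hb]
  rw [Finset.sum_congr rfl (fun a _ => ha a)]
  rw [← Finset.sum_mul, Finset.sum_ite_eq' Finset.univ p.1 (fun _ => (1:ℝ))]
  simp

lemma deg_block (p : Fin r × Fin s) (hs : 1 ≤ s) :
    ((K1joinL r s).degree (some (some p)) : ℝ) = s + 1 := by
  have h : (K1joinL r s).degree (some (some p)) = ∑ u, if (K1joinL r s).Adj (some (some p)) u then 1 else 0 := by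
    rw [degree, neighborFinset_eq_filter, Finset.card_filter]
  rw [h]
  push_cast
  rw [sumV]
  have h1 : ((if (K1joinL r s).Adj (some (some p)) none then (1:ℝ) else 0)) = 1 := by
    simp [adj_block]
  have h2 : ((if (K1joinL r s).Adj (some (some p)) (some none) then (1:ℝ) else 0)) = 1 := by
    simp [adj_block]
  rw [h1, h2, block_sum]
  have : (1:ℝ) ≤ s := by exact_mod_cast hs
  ring

/-- Weighted row sum decomposition of the signless Laplacian. -/
lemma Q_row {V : Type*} [Fintype V] [DecidableEq V] (G : SimpleGraph V) (w : V → ℝ) (v : V) :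
    ∑ u, signlessLaplacian G v u * w u
      = (G.degree v : ℝ) * w v + ∑ u, (if G.Adj v u then w u else 0) := by
  simp only [signlessLaplacian, Matrix.add_apply, Matrix.diagonal_apply,
    SimpleGraph.adjMatrix_apply, add_mul]
  rw [Finset.sum_add_distrib]
  congr 1
  · have : ∀ u, ((if v = u then (G.degree v : ℝ) else 0) * w u)
        = (if v = u then (G.degree v : ℝ) * w u else 0) := by
      intro u; split_ifs <;> ring
    rw [Finset.sum_congr rfl (fun u _ => this u), Finset.sum_ite_eq Finset.univ v]
    simp
  · refine Finset.sum_congr rfl fun u _ => ?_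
    split_ifs <;> ring

end K1joinLFacts

theorem qspec_K1_join_L (r t n : ℕ) (hr : 1 ≤ r) (ht : 3 ≤ t) (hn : n = r * (t - 1) + 2) :
    qspec (K1joinL r (t - 1)) < (n : ℝ) + 2 * t - 3 := by
  subst hn
  set s := t - 1 with hs
  have hs2 : 2 ≤ s := by omega
  have hts : t = s + 1 := by omega
  have hR : (1:ℝ) ≤ (r:ℝ) := by exact_mod_cast hr
  have hS : (2:ℝ) ≤ (s:ℝ) := by exact_mod_cast hs2
  have hB : ((r * s + 2 : ℕ) : ℝ) + 2 * t - 3 = (r:ℝ) * s + 2 * s + 1 := by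
    rw [hts]; push_cast; ring
  rw [hB]
  set W : Option (Option (Fin r × Fin s)) → ℝ :=
    fun v => Option.elim v ((r:ℝ) * s + 1) (fun u => Option.elim u ((r:ℝ) * s + 1)
      (fun _ => (s:ℝ) + 1)) with hW
  have hw : ∀ v, 0 < W v := by
    rintro (_ | _ | p) <;> simp [hW] <;> positivity
  apply qspec_lt _ W hw
  rintro (_ | _ | p)
  · -- apex
    rw [Q_row, sumV]
    have e0 : (if (K1joinL r s).Adj none none then W none else 0) = 0 := by
      simp [adj_apex]
    have e1 : (if (K1joinL r s).Adj none (some none) then W (some none) else 0)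
        = (r:ℝ) * s + 1 := by simp [adj_apex, hW]
    have e2 : (∑ p : Fin r × Fin s, if (K1joinL r s).Adj none (some (some p))
        then W (some (some p)) else 0) = (r:ℝ) * s * ((s:ℝ) + 1) := by
      have : ∀ p : Fin r × Fin s, (if (K1joinL r s).Adj none (some (some p))
          then W (some (some p)) else 0) = (s:ℝ) + 1 := by
        intro p; simp [adj_apex, hW]
      rw [Finset.sum_congr rfl (fun p _ => this p), Finset.sum_const]
      simp [Finset.card_univ]
      ring
    rw [e0, e1, e2, deg_apex]
    show ((r:ℝ) * s + 1) * ((r:ℝ) * s + 1) + (0 + ((r:ℝ) * s + 1) + (r:ℝ) * s * ((s:ℝ)+1))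
        < ((r:ℝ) * s + 2 * s + 1) * W none
    simp only [hW, Option.elim]
    nlinarith [mul_nonneg (mul_nonneg (le_trans zero_le_one hR) (by linarith : (0:ℝ) ≤ (s:ℝ)))
      (by linarith : (0:ℝ) ≤ (s:ℝ) - 2)]
  · -- center
    rw [Q_row, sumV]
    have e0 : (if (K1joinL r s).Adj (some none) none then W none else 0) = (r:ℝ) * s + 1 := by
      simp [adj_center, hW]
    have e1 : (if (K1joinL r s).Adj (some none) (some none) then W (some none) else 0) = 0 := by
      simp [adj_center]
    have e2 : (∑ p : Fin r × Fin s, if (K1joinL r s).Adj (some none) (some (some p))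
        then W (some (some p)) else 0) = (r:ℝ) * s * ((s:ℝ) + 1) := by
      have : ∀ p : Fin r × Fin s, (if (K1joinL r s).Adj (some none) (some (some p))
          then W (some (some p)) else 0) = (s:ℝ) + 1 := by
        intro p; simp [adj_center, hW]
      rw [Finset.sum_congr rfl (fun p _ => this p), Finset.sum_const]
      simp [Finset.card_univ]
      ring
    rw [e0, e1, e2, deg_center]
    show ((r:ℝ) * s + 1) * ((r:ℝ) * s + 1) + (((r:ℝ) * s + 1) + 0 + (r:ℝ) * s * ((s:ℝ)+1))
        < ((r:ℝ) * s + 2 * s + 1) * W (some none)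
    simp only [hW, Option.elim]
    nlinarith [mul_nonneg (mul_nonneg (le_trans zero_le_one hR) (by linarith : (0:ℝ) ≤ (s:ℝ)))
      (by linarith : (0:ℝ) ≤ (s:ℝ) - 2)]
  · -- block vertex
    rw [Q_row, sumV]
    have e0 : (if (K1joinL r s).Adj (some (some p)) none then W none else 0)
        = (r:ℝ) * s + 1 := by simp [adj_block, hW]
    have e1 : (if (K1joinL r s).Adj (some (some p)) (some none) then W (some none) else 0)
        = (r:ℝ) * s + 1 := by simp [adj_block, hW]
    have e2 : (∑ q : Fin r × Fin s, if (K1joinL r s).Adj (some (some p)) (some (some q))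
        then W (some (some q)) else 0) = ((s:ℝ) - 1) * ((s:ℝ) + 1) := by
      have : (∑ q : Fin r × Fin s, if (K1joinL r s).Adj (some (some p)) (some (some q))
          then W (some (some q)) else 0)
          = (∑ q : Fin r × Fin s, if (K1joinL r s).Adj (some (some p)) (some (some q))
            then ((s:ℝ)+1) else 0) := by
        refine Finset.sum_congr rfl fun q _ => ?_
        simp [hW]
      rw [this, block_sum]
    rw [e0, e1, e2, deg_block p (by omega)]
    show ((s:ℝ) + 1) * ((s:ℝ) + 1) + (((r:ℝ) * s + 1) + ((r:ℝ) * s + 1) + ((s:ℝ)-1)*((s:ℝ)+1))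
        < ((r:ℝ) * s + 2 * s + 1) * W (some (some p))
    simp only [hW, Option.elim]
    nlinarith [mul_nonneg (mul_nonneg (le_trans zero_le_one hR) (by linarith : (0:ℝ) ≤ (s:ℝ)))
      (by linarith : (0:ℝ) ≤ (s:ℝ) - 1)]
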